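/- Let α_0 > −1, let c_1, c_2 > 0 with c_1 ≠ c_2, and let n, m be nonnegative integers. Define F : (0,∞) → ℝ by F(x) = x^{−α_0} e^{c_1 x} (d^n/dx^n) [ e^{(c_2−c_1)x} (d^m/dx^m) ( e^{−c_2 x} x^{n+m+α_0} ) ]. Then P(x) = (−1)^{n+m} c_1^{−n} c_2^{−m} F(x) coincides on (0,∞) with a monic polynomial of degree n + m that satisfies ∫_0^∞ P(x) x^{α_0} e^{−c_1 x} x^k dx = 0 for k = 0,…,n−1 and ∫_0^∞ P(x) x^{α_0} e^{−c_2 x} x^k dx = 0 for k = 0,…,m−1. -/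

import Mathlib

open MeasureTheory Polynomial Set Filter

noncomputable def Aop (c β : ℝ) (p : ℝ[X]) : ℝ[X] :=
  Polynomial.C β * p + Polynomial.X * Polynomial.derivative p
    - Polynomial.C c * (Polynomial.X * p)

noncomputable def Ait (c β : ℝ) : ℕ → ℝ[X] → ℝ[X]
  | 0, p => p
  | (k+1), p => Aop c (β - k) (Ait c β k p)

noncomputable def Gfun (c β : ℝ) (p : ℝ[X]) (k : ℕ) (x : ℝ) : ℝ :=
  Real.exp (-c * x) * x ^ (β - k) * (Ait c β k p).eval x

noncomputable def Bop (a : ℝ) (s : ℝ[X]) : ℝ[X] :=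
  Polynomial.C a * s + Polynomial.derivative s

noncomputable def Bit (a : ℝ) (j : ℕ) (s : ℝ[X]) : ℝ[X] := (Bop a)^[j] s

lemma hasDerivAt_expc (a x : ℝ) :
    HasDerivAt (fun y : ℝ => Real.exp (a * y)) (a * Real.exp (a * x)) x := by
  simpa [Function.comp_def, mul_comm] using
    (Real.hasDerivAt_exp (a * x)).comp x ((hasDerivAt_id x).const_mul a)

lemma hasDerivAt_key (c β : ℝ) (p : ℝ[X]) {x : ℝ} (hx : 0 < x) :
    HasDerivAt (fun y : ℝ => Real.exp (-c * y) * y ^ β * p.eval y)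
      (Real.exp (-c * x) * x ^ (β - 1) * (Aop c β p).eval x) x := by
  have h1 := hasDerivAt_expc (-c) x
  have h2 : HasDerivAt (fun y : ℝ => y ^ β) (β * x ^ (β - 1)) x :=
    Real.hasDerivAt_rpow_const (Or.inl hx.ne')
  have h3 := p.hasDerivAt x
  have hxβ : x ^ β = x ^ (β - 1) * x := by
    nth_rewrite 1 [show β = β - 1 + 1 by ring]
    exact Real.rpow_add_one hx.ne' _
  refine ((h1.mul h2).mul h3).congr_deriv ?_
  simp only [Aop, Polynomial.eval_add, Polynomial.eval_sub, Polynomial.eval_mul,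
    Polynomial.eval_C, Polynomial.eval_X, Pi.mul_apply]
  rw [hxβ]; ring

lemma Gfun_succ (c β : ℝ) (p : ℝ[X]) (k : ℕ) :
    Gfun c β p (k+1) = fun x : ℝ => Real.exp (-c * x) * x ^ (β - (k:ℝ) - 1) *
      (Aop c (β - (k:ℝ)) (Ait c β k p)).eval x := by
  funext x
  simp only [Gfun]
  have e1 : (β - ((k+1:ℕ):ℝ)) = β - (k:ℝ) - 1 := by push_cast; ring
  rw [e1]
  simp only [Ait]

lemma hasDerivAt_G (c β : ℝ) (p : ℝ[X]) (k : ℕ) {x : ℝ} (hx : 0 < x) :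
    HasDerivAt (Gfun c β p k) (Gfun c β p (k+1) x) x := by
  have h := hasDerivAt_key c (β - k) (Ait c β k p) hx
  simp only [Gfun_succ]
  exact h

lemma Gfun_zero (c β : ℝ) (p : ℝ[X]) :
    Gfun c β p 0 = fun y : ℝ => Real.exp (-c * y) * y ^ β * p.eval y := by
  funext y; simp [Gfun, Ait]

lemma iteratedDeriv_G (c β : ℝ) (p : ℝ[X]) (k : ℕ) :
    ∀ x ∈ Ioi (0:ℝ), iteratedDeriv k (Gfun c β p 0) x = Gfun c β p k x := by
  induction k with
  | zero => intro x _; simp [iteratedDeriv_zero]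
  | succ k ih =>
    intro x hx
    rw [iteratedDeriv_succ]
    have hev : iteratedDeriv k (Gfun c β p 0) =ᶠ[nhds x] Gfun c β p k :=
      Filter.eventuallyEq_of_mem (isOpen_Ioi.mem_nhds hx) ih
    rw [hev.deriv_eq]
    exact (hasDerivAt_G c β p k hx).deriv

lemma iteratedDeriv_congr_on {f g : ℝ → ℝ} (h : ∀ y ∈ Ioi (0:ℝ), f y = g y) (k : ℕ) :
    ∀ x ∈ Ioi (0:ℝ), iteratedDeriv k f x = iteratedDeriv k g x := by
  induction k with
  | zero => simpa using h
  | succ k ih =>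
    intro x hx
    rw [iteratedDeriv_succ, iteratedDeriv_succ]
    exact Filter.EventuallyEq.deriv_eq
      (Filter.eventuallyEq_of_mem (isOpen_Ioi.mem_nhds hx) ih)

lemma Aop_coeff_top {c β : ℝ} (p : ℝ[X]) :
    (Aop c β p).coeff (p.natDegree + 1) = -c * p.leadingCoeff := by
  have h1 : p.coeff (p.natDegree + 1) = 0 :=
    coeff_eq_zero_of_natDegree_lt (Nat.lt_succ_self _)
  unfold Aop
  simp only [coeff_sub, coeff_add, coeff_C_mul, coeff_X_mul, coeff_derivative]
  rw [h1, Polynomial.leadingCoeff]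
  ring

lemma Aop_natDegree_le (c β : ℝ) (p : ℝ[X]) : (Aop c β p).natDegree ≤ p.natDegree + 1 := by
  unfold Aop
  refine (natDegree_sub_le _ _).trans (max_le ((natDegree_add_le _ _).trans (max_le ?_ ?_)) ?_)
  · exact (natDegree_C_mul_le _ _).trans (Nat.le_succ _)
  · refine natDegree_mul_le.trans ?_
    have := natDegree_derivative_le p
    simp only [natDegree_X]
    omega
  · refine (natDegree_C_mul_le _ _).trans (natDegree_mul_le.trans ?_)
    simp only [natDegree_X]
    omega

lemma Aop_facts {c : ℝ} (hc : c ≠ 0) (β : ℝ) {p : ℝ[X]} (hp : p ≠ 0) :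
    (Aop c β p).natDegree = p.natDegree + 1 ∧
      (Aop c β p).leadingCoeff = -c * p.leadingCoeff := by
  have hco := Aop_coeff_top (c := c) (β := β) p
  have hne : (Aop c β p).coeff (p.natDegree + 1) ≠ 0 := by
    rw [hco]
    exact mul_ne_zero (neg_ne_zero.mpr hc) (leadingCoeff_ne_zero.mpr hp)
  have hdeg : (Aop c β p).natDegree = p.natDegree + 1 :=
    le_antisymm (Aop_natDegree_le c β p) (le_natDegree_of_ne_zero hne)
  exact ⟨hdeg, by rw [Polynomial.leadingCoeff, hdeg, hco]⟩

lemma Ait_facts {c : ℝ} (hc : c ≠ 0) (β : ℝ) {p : ℝ[X]} (hp : p ≠ 0) (k : ℕ) :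
    Ait c β k p ≠ 0 ∧ (Ait c β k p).natDegree = p.natDegree + k ∧
      (Ait c β k p).leadingCoeff = (-c)^k * p.leadingCoeff := by
  induction k with
  | zero => simpa [Ait] using hp
  | succ k ih =>
    obtain ⟨h0, hd, hl⟩ := ih
    have hf := Aop_facts hc (β - k) h0
    have hl' : (Ait c β (k+1) p).leadingCoeff = (-c)^(k+1) * p.leadingCoeff := by
      show (Aop c (β - k) (Ait c β k p)).leadingCoeff = _
      rw [hf.2, hl]; ring
    refine ⟨?_, ?_, hl'⟩
    · apply leadingCoeff_ne_zero.mp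
      rw [hl']
      exact mul_ne_zero (pow_ne_zero _ (neg_ne_zero.mpr hc)) (leadingCoeff_ne_zero.mpr hp)
    · show (Aop c (β - k) (Ait c β k p)).natDegree = _
      rw [hf.1, hd]
      omega

lemma Bop_natDegree_le (a : ℝ) (s : ℝ[X]) : (Bop a s).natDegree ≤ s.natDegree :=
  (natDegree_add_le _ _).trans (max_le (natDegree_C_mul_le _ _)
    ((natDegree_derivative_le _).trans (Nat.sub_le _ _)))

lemma Bit_natDegree_le (a : ℝ) (j : ℕ) (s : ℝ[X]) : (Bit a j s).natDegree ≤ s.natDegree := by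
  induction j generalizing s with
  | zero => simp [Bit]
  | succ j ih =>
    have : Bit a (j+1) s = Bit a j (Bop a s) := Function.iterate_succ_apply (Bop a) j s
    rw [this]
    exact (ih (Bop a s)).trans (Bop_natDegree_le a s)

lemma Bit_zero (j : ℕ) (s : ℝ[X]) : Bit 0 j s = Polynomial.derivative^[j] s := by
  have h : Bop (0:ℝ) = fun t : ℝ[X] => Polynomial.derivative t := by
    funext t; simp [Bop]
  simp [Bit, h]

lemma integrable_aux {b δ : ℝ} (hb : 0 < b) (hδ : -1 < δ) (s : ℝ[X]) :
    IntegrableOn (fun x : ℝ => Real.exp (-b * x) * x ^ δ * s.eval x) (Ioi 0) := by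
  have key : ∀ x ∈ Ioi (0:ℝ), (fun x : ℝ => ∑ i ∈ Finset.range (s.natDegree + 1),
        s.coeff i * (x ^ (δ + i) * Real.exp (-b * x))) x
      = Real.exp (-b * x) * x ^ δ * s.eval x := by
    intro x hx
    rw [Polynomial.eval_eq_sum_range, Finset.mul_sum]
    refine Finset.sum_congr rfl fun i _ => ?_
    rw [Real.rpow_add hx, Real.rpow_natCast]
    ring
  refine IntegrableOn.congr_fun ?_ key measurableSet_Ioi
  refine integrable_finset_sum _ fun i _ => Integrable.const_mul ?_ _
  have hi : (-1:ℝ) < δ + i := by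
    have : (0:ℝ) ≤ i := Nat.cast_nonneg i
    linarith
  have := integrableOn_rpow_mul_exp_neg_mul_rpow (p := 1) hi one_pos hb
  simpa [Real.rpow_one, IntegrableOn] using this

lemma tendsto_aux {b δ : ℝ} (hb : 0 < b) (s : ℝ[X]) :
    Tendsto (fun x : ℝ => Real.exp (-b * x) * x ^ δ * s.eval x) atTop (nhds 0) := by
  have h0 : Tendsto (fun x : ℝ => ∑ i ∈ Finset.range (s.natDegree + 1),
      s.coeff i * (x ^ (δ + i) * Real.exp (-b * x))) atTop (nhds 0) := by
    have h := fun i : ℕ =>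
      (tendsto_rpow_mul_exp_neg_mul_atTop_nhds_zero (δ + i) b hb).const_mul (s.coeff i)
    simpa using tendsto_finset_sum (Finset.range (s.natDegree + 1)) (fun i _ => h i)
  refine h0.congr' ?_
  filter_upwards [eventually_gt_atTop 0] with x hx
  rw [Polynomial.eval_eq_sum_range, Finset.mul_sum]
  refine (Finset.sum_congr rfl fun i _ => ?_).symm
  rw [Real.rpow_add hx, Real.rpow_natCast]
  ring

lemma ibp_step {c a γ : ℝ} (hca : a < c) (hγ : 0 < γ) (p s : ℝ[X]) :
    (∫ x in Ioi (0:ℝ), Real.exp (a*x) * s.eval x *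
        (Real.exp (-c * x) * x ^ (γ - 1) * (Aop c γ p).eval x))
      = -∫ x in Ioi (0:ℝ), Real.exp (a*x) * (Bop a s).eval x *
          (Real.exp (-c * x) * x ^ γ * p.eval x) := by
  have hb : 0 < c - a := by linarith
  have hrw : ∀ x : ℝ, Real.exp (-(c-a) * x) = Real.exp (a*x) * Real.exp (-c * x) := by
    intro x
    rw [← Real.exp_add]
    ring_nf
  have hT1 : IntegrableOn (fun x : ℝ => Real.exp (a*x) * s.eval x *
      (Real.exp (-c * x) * x ^ (γ - 1) * (Aop c γ p).eval x)) (Ioi 0) := by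
    refine (integrable_aux (δ := γ - 1) hb (by linarith) (s * Aop c γ p)).congr_fun (fun x _ => ?_)
      measurableSet_Ioi
    simp only [Polynomial.eval_mul]
    rw [hrw]; ring
  have hT2 : IntegrableOn (fun x : ℝ => Real.exp (a*x) * (Bop a s).eval x *
      (Real.exp (-c * x) * x ^ γ * p.eval x)) (Ioi 0) := by
    refine (integrable_aux (δ := γ) hb (by linarith) (Bop a s * p)).congr_fun (fun x _ => ?_)
      measurableSet_Ioi
    simp only [Polynomial.eval_mul]
    rw [hrw]; ring
  have hderiv : ∀ x ∈ Ioi (0:ℝ),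
      HasDerivAt (fun x : ℝ => Real.exp (a*x) * s.eval x *
          (Real.exp (-c * x) * x ^ γ * p.eval x))
        (Real.exp (a*x) * (Bop a s).eval x * (Real.exp (-c * x) * x ^ γ * p.eval x)
          + Real.exp (a*x) * s.eval x *
            (Real.exp (-c * x) * x ^ (γ - 1) * (Aop c γ p).eval x)) x := by
    intro x hx
    have hu := hasDerivAt_key c γ p (mem_Ioi.mp hx)
    have hv : HasDerivAt (fun y : ℝ => Real.exp (a*y) * s.eval y)
        (Real.exp (a*x) * (Bop a s).eval x) x := by
      have h := (hasDerivAt_expc a x).mul (s.hasDerivAt x)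
      refine h.congr_deriv ?_
      simp only [Bop, Polynomial.eval_add, Polynomial.eval_mul, Polynomial.eval_C]
      ring
    exact hv.mul hu
  have hcont : ContinuousWithinAt (fun x : ℝ => Real.exp (a*x) * s.eval x *
      (Real.exp (-c * x) * x ^ γ * p.eval x)) (Ici (0:ℝ)) 0 := by
    apply ContinuousAt.continuousWithinAt
    have c1 : ContinuousAt (fun x : ℝ => Real.exp (a*x) * s.eval x) 0 := by fun_prop
    have c2 : ContinuousAt (fun x : ℝ => Real.exp (-c * x)) 0 := by fun_prop
    have c3 : ContinuousAt (fun x : ℝ => x ^ γ) 0 :=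
      Real.continuousAt_rpow_const 0 γ (Or.inr hγ.le)
    have c4 : ContinuousAt (fun x : ℝ => p.eval x) 0 := by fun_prop
    exact c1.mul ((c2.mul c3).mul c4)
  have htop : Tendsto (fun x : ℝ => Real.exp (a*x) * s.eval x *
      (Real.exp (-c * x) * x ^ γ * p.eval x)) atTop (nhds 0) := by
    refine (tendsto_aux hb (δ := γ) (s * p)).congr fun x => ?_
    simp only [Polynomial.eval_mul]
    rw [hrw]; ring
  have key := integral_Ioi_of_hasDerivAt_of_tendsto hcont hderiv (hT2.add hT1) htop
  have hzero : Real.exp (a*(0:ℝ)) * s.eval 0 * (Real.exp (-c * (0:ℝ)) * (0:ℝ) ^ γ * p.eval 0)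
      = 0 := by
    rw [Real.zero_rpow hγ.ne']
    ring
  rw [hzero, sub_zero] at key
  rw [MeasureTheory.integral_add hT2 hT1] at key
  linarith

lemma Gfun_eq (c β : ℝ) (p : ℝ[X]) (k : ℕ) :
    Gfun c β p k = fun x : ℝ => Real.exp (-c * x) * x ^ (β - (k:ℝ)) * (Ait c β k p).eval x :=
  rfl

lemma ibp_chain {c a β : ℝ} (hca : a < c) (p : ℝ[X]) (J : ℕ) (hβ : 0 < β - J + 1) :
    ∀ j, j ≤ J → ∀ s : ℝ[X],
      (∫ x in Ioi (0:ℝ), Real.exp (a*x) * s.eval x * Gfun c β p J x)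
        = (-1:ℝ)^j * ∫ x in Ioi (0:ℝ),
            Real.exp (a*x) * (Bit a j s).eval x * Gfun c β p (J - j) x := by
  intro j
  induction j with
  | zero => intro _ s; simp [Bit]
  | succ j ih =>
    intro hj s
    rw [ih (Nat.le_of_succ_le hj) s]
    have hiJ : J - j = (J - (j+1)) + 1 := by omega
    have hcast : ((J - (j+1) : ℕ) : ℝ) = (J:ℝ) - ((j:ℝ) + 1) := by
      have h1 : ((J - (j+1) : ℕ) : ℝ) + ((j:ℝ) + 1) = (J:ℝ) := by
        exact_mod_cast congrArg (Nat.cast : ℕ → ℝ) (Nat.sub_add_cancel hj)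
      linarith
    have hγ : 0 < β - ((J - (j+1) : ℕ) : ℝ) := by
      rw [hcast]
      have : (0:ℝ) ≤ j := Nat.cast_nonneg j
      have hJ : ((j:ℝ) + 1) ≤ J := by exact_mod_cast hj
      linarith
    have step := ibp_step (a := a) hca hγ (Ait c β (J - (j+1)) p) (Bit a j s)
    have hG1 : Gfun c β p (J - j)
        = fun x : ℝ => Real.exp (-c * x) * x ^ (β - ((J - (j+1) : ℕ) : ℝ) - 1) *
            (Aop c (β - ((J - (j+1) : ℕ) : ℝ)) (Ait c β (J - (j+1)) p)).eval x := by
      rw [hiJ, Gfun_succ]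
    rw [hG1, step, Gfun_eq c β p (J - (j+1))]
    have hBit : Bop a (Bit a j s) = Bit a (j+1) s :=
      (Function.iterate_succ_apply' (Bop a) j s).symm
    rw [hBit]
    ring


/-- **Rodrigues formula for multiple Laguerre polynomials of the second kind** (r = 2):
`(-1)^{n+m} c₁^{-n} c₂^{-m} x^{-α₀} e^{c₁x} D^n [e^{(c₂-c₁)x} D^m (e^{-c₂x} x^{n+m+α₀})]`
coincides on `(0,∞)` with the monic multiple Laguerre polynomial
`L_{n,m}^{(α₀,c₁,c₂)}` of degree `n+m`. -/
theorem stmt_11 (α₀ : ℝ) (h0 : -1 < α₀) (c₁ c₂ : ℝ) (hc1 : 0 < c₁) (hc2 : 0 < c₂)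
    (hc : c₁ ≠ c₂) (n m : ℕ) (F : ℝ → ℝ)
    (hF : ∀ x ∈ Set.Ioi (0:ℝ),
      F x = x ^ (-α₀) * Real.exp (c₁ * x) *
        iteratedDeriv n (fun y => Real.exp ((c₂ - c₁) * y) *
          iteratedDeriv m (fun z => Real.exp (-c₂ * z) * z ^ ((n : ℝ) + m + α₀)) y) x) :
    ∃ P : Polynomial ℝ, P.Monic ∧ P.natDegree = n + m ∧
      (∀ x ∈ Set.Ioi (0:ℝ),
        (-1) ^ (n + m) * c₁ ^ (-(n : ℤ)) * c₂ ^ (-(m : ℤ)) * F x = P.eval x) ∧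
      (∀ k < n,
        ∫ x in Set.Ioi (0:ℝ), P.eval x * (x ^ α₀ * Real.exp (-c₁ * x)) * x ^ k = 0) ∧
      (∀ k < m,
        ∫ x in Set.Ioi (0:ℝ), P.eval x * (x ^ α₀ * Real.exp (-c₂ * x)) * x ^ k = 0) := by
  set β₁ : ℝ := (n : ℝ) + m + α₀ with hβ₁
  set β₂ : ℝ := (n : ℝ) + α₀ with hβ₂
  set q : ℝ[X] := Ait c₂ β₁ m 1 with hq
  set r : ℝ[X] := Ait c₁ β₂ n q with hr
  set κ : ℝ := (-1 : ℝ) ^ (n + m) * c₁ ^ (-(n : ℤ)) * c₂ ^ (-(m : ℤ)) with hκ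
  obtain ⟨hq0, hqd, hql⟩ := Ait_facts hc2.ne' β₁ (p := (1 : ℝ[X])) one_ne_zero m
  rw [← hq] at hq0 hqd hql
  obtain ⟨hr0, hrd, hrl⟩ := Ait_facts hc1.ne' β₂ hq0 n
  rw [← hr] at hr0 hrd hrl
  have hqd' : q.natDegree = m := by simpa using hqd
  have hql' : q.leadingCoeff = (-c₂) ^ m := by simpa using hql
  have hrd' : r.natDegree = n + m := by rw [hrd, hqd']; omega
  have hrl' : r.leadingCoeff = (-c₁) ^ n * (-c₂) ^ m := by rw [hrl, hql']
  have h1 : (-c₁ : ℝ) ^ n = (-1) ^ n * c₁ ^ n := by rw [neg_pow]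
  have h2 : (-c₂ : ℝ) ^ m = (-1) ^ m * c₂ ^ m := by rw [neg_pow]
  have e1 : (-1 : ℝ) ^ (n + m) * (-1 : ℝ) ^ (n + m) = 1 := by rw [← mul_pow]; norm_num
  have e2 : (c₁ ^ n)⁻¹ * c₁ ^ n = 1 := inv_mul_cancel₀ (pow_ne_zero _ hc1.ne')
  have e3 : (c₂ ^ m)⁻¹ * c₂ ^ m = 1 := inv_mul_cancel₀ (pow_ne_zero _ hc2.ne')
  have hκr : κ * r.leadingCoeff = 1 := by
    calc κ * r.leadingCoeff
        = ((-1 : ℝ) ^ (n + m) * (-1 : ℝ) ^ (n + m)) * ((c₁ ^ n)⁻¹ * c₁ ^ n) *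
            ((c₂ ^ m)⁻¹ * c₂ ^ m) := by
          rw [hrl', hκ, zpow_neg, zpow_neg, zpow_natCast, zpow_natCast, h1, h2, pow_add]
          ring
      _ = 1 := by rw [e1, e2, e3]; ring
  have hκ0 : κ ≠ 0 := left_ne_zero_of_mul (hκr ▸ one_ne_zero)
  have hPl : (Polynomial.C κ * r).leadingCoeff = 1 := by
    rw [leadingCoeff_mul, leadingCoeff_C, hκr]
  have hβ₂n : β₂ - (n : ℝ) = α₀ := by rw [hβ₂]; ring
  have hβn : 0 < β₂ - (n : ℝ) + 1 := by rw [hβ₂]; linarith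
  have hβm : 0 < β₁ - (m : ℝ) + 1 := by
    rw [hβ₁]
    have : (0 : ℝ) ≤ n := Nat.cast_nonneg n
    linarith
  refine ⟨Polynomial.C κ * r, hPl, ?_, ?_, ?_, ?_⟩
  · rw [natDegree_mul (by simpa using hκ0) hr0, natDegree_C, hrd']
    omega
  · -- pointwise identity
    intro x hx
    have hx' : (0 : ℝ) < x := hx
    have hinner : ∀ y ∈ Set.Ioi (0 : ℝ),
        Real.exp ((c₂ - c₁) * y) *
          iteratedDeriv m (fun z => Real.exp (-c₂ * z) * z ^ β₁) y = Gfun c₁ β₂ q 0 y := by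
      intro y hy
      have hgq : iteratedDeriv m (fun z : ℝ => Real.exp (-c₂ * z) * z ^ β₁) y
          = Gfun c₂ β₁ 1 m y := by
        rw [← iteratedDeriv_G c₂ β₁ 1 m y hy]
        congr 1
        rw [Gfun_zero]
        funext z
        simp
      rw [hgq]
      simp only [Gfun_eq]
      have hee : β₁ - (m : ℝ) = β₂ - ((0 : ℕ) : ℝ) := by rw [hβ₁, hβ₂]; push_cast; ring
      have hex : Real.exp ((c₂ - c₁) * y) * Real.exp (-c₂ * y) = Real.exp (-c₁ * y) := by
        rw [← Real.exp_add]; ring_nf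
      have hait : Ait c₁ β₂ 0 q = q := rfl
      rw [hait, ← hq, hee, ← hex]
      ring
    have hiter : iteratedDeriv n (fun y => Real.exp ((c₂ - c₁) * y) *
          iteratedDeriv m (fun z => Real.exp (-c₂ * z) * z ^ β₁) y) x = Gfun c₁ β₂ q n x := by
      rw [iteratedDeriv_congr_on hinner n x hx, iteratedDeriv_G c₁ β₂ q n x hx]
    rw [hF x hx, hiter, Gfun_eq, ← hr, hβ₂n, Polynomial.eval_mul, Polynomial.eval_C]
    have hx1 : Real.exp (c₁ * x) * Real.exp (-c₁ * x) = 1 := by rw [← Real.exp_add]; simp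
    have hx2 : x ^ (-α₀) * x ^ α₀ = 1 := by rw [← Real.rpow_add hx']; simp
    calc κ * (x ^ (-α₀) * Real.exp (c₁ * x) * (Real.exp (-c₁ * x) * x ^ α₀ * r.eval x))
        = κ * ((x ^ (-α₀) * x ^ α₀) * (Real.exp (c₁ * x) * Real.exp (-c₁ * x)) * r.eval x) := by
          ring
      _ = κ * r.eval x := by rw [hx1, hx2]; ring
  · -- first orthogonality
    intro k hk
    have hEq : Set.EqOn
        (fun x : ℝ => (Polynomial.C κ * r).eval x * (x ^ α₀ * Real.exp (-c₁ * x)) * x ^ k)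
        (fun x : ℝ => κ * (Real.exp (0 * x) * ((X : ℝ[X]) ^ k).eval x * Gfun c₁ β₂ q n x))
        (Set.Ioi 0) := by
      intro x hx
      simp only [Gfun_eq, ← hr, hβ₂n, Polynomial.eval_mul, Polynomial.eval_C,
        Polynomial.eval_pow, Polynomial.eval_X, zero_mul, Real.exp_zero]
      ring
    rw [setIntegral_congr_fun measurableSet_Ioi hEq, integral_const_mul,
      ibp_chain (a := 0) hc1 q n hβn (k + 1) (by omega) ((X : ℝ[X]) ^ k)]
    have hz : Bit (0 : ℝ) (k + 1) ((X : ℝ[X]) ^ k) = 0 := by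
      rw [Bit_zero]
      apply Polynomial.iterate_derivative_eq_zero
      simpa [natDegree_X_pow] using Nat.lt_succ_self k
    rw [hz]
    simp
  · -- second orthogonality
    intro k hk
    have ha : c₁ - c₂ < c₁ := by linarith
    have hEq2 : Set.EqOn
        (fun x : ℝ => (Polynomial.C κ * r).eval x * (x ^ α₀ * Real.exp (-c₂ * x)) * x ^ k)
        (fun x : ℝ => κ * (Real.exp ((c₁ - c₂) * x) * ((X : ℝ[X]) ^ k).eval x *
          Gfun c₁ β₂ q n x)) (Set.Ioi 0) := by
      intro x hx
      simp only [Gfun_eq, ← hr, hβ₂n, Polynomial.eval_mul, Polynomial.eval_C,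
        Polynomial.eval_pow, Polynomial.eval_X]
      have hex : Real.exp ((c₁ - c₂) * x) * Real.exp (-c₁ * x) = Real.exp (-c₂ * x) := by
        rw [← Real.exp_add]; ring_nf
      rw [← hex]
      ring
    rw [setIntegral_congr_fun measurableSet_Ioi hEq2, integral_const_mul,
      ibp_chain (a := c₁ - c₂) ha q n hβn n le_rfl ((X : ℝ[X]) ^ k), Nat.sub_self]
    have hEq3 : Set.EqOn
        (fun x : ℝ => Real.exp ((c₁ - c₂) * x) * (Bit (c₁ - c₂) n ((X : ℝ[X]) ^ k)).eval x *
          Gfun c₁ β₂ q 0 x)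
        (fun x : ℝ => Real.exp (0 * x) * (Bit (c₁ - c₂) n ((X : ℝ[X]) ^ k)).eval x *
          Gfun c₂ β₁ 1 m x) (Set.Ioi 0) := by
      intro x hx
      simp only [Gfun_eq, ← hq]
      have hee : β₂ - ((0 : ℕ) : ℝ) = β₁ - (m : ℝ) := by rw [hβ₁, hβ₂]; push_cast; ring
      have hait : Ait c₁ β₂ 0 q = q := rfl
      have hex : Real.exp ((c₁ - c₂) * x) * Real.exp (-c₁ * x) = Real.exp (-c₂ * x) := by
        rw [← Real.exp_add]; ring_nf
      rw [hait, hee, ← hex, zero_mul, Real.exp_zero]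
      ring
    rw [setIntegral_congr_fun measurableSet_Ioi hEq3,
      ibp_chain (a := 0) hc2 (1 : ℝ[X]) m hβm (k + 1) (by omega) _]
    have hz : Bit (0 : ℝ) (k + 1) (Bit (c₁ - c₂) n ((X : ℝ[X]) ^ k)) = 0 := by
      rw [Bit_zero]
      apply Polynomial.iterate_derivative_eq_zero
      have hle := Bit_natDegree_le (c₁ - c₂) n ((X : ℝ[X]) ^ k)
      rw [natDegree_X_pow] at hle
      omega
    rw [hz]
    simp
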